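/- Let δ ∈ (0,1] and σ > 0. Assume: (i) μ ≪ μ_𝒮 ⊗ μ_ℋ with I := KL(μ ‖ μ_𝒮 ⊗ μ_ℋ) < ∞; (ii) for μ_ℋ-a.e. h the measures q(h) and κ(h) are mutually absolutely continuous with κ(h) ≪ μ_𝒮; (iii) the function G(s,h) = (1/n)·log((dq(h)/dμ_𝒮)(s)) is μ-integrable; and (iv) for every λ > 0, log ∫ exp(λ·n·G) dμ ≤ λ·n·∫ G dμ + λ²σ²/2 (i.e., n·G is σ-subgaussian around its mean). Then μ({(s,h) : G(s,h) > I/n + (1/n)·√(2σ²·log(1/δ))}) ≤ δ. -/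

import Mathlib

open MeasureTheory ProbabilityTheory Set
open scoped ENNReal

/-- **Gibbs' inequality**: the Kullback-Leibler divergence between two probability
measures is nonnegative. -/
lemma gibbs_nonneg {α : Type*} {mα : MeasurableSpace α} {μ ν : Measure α}
    [IsProbabilityMeasure μ] [IsProbabilityMeasure ν] (hμν : μ ≪ ν)
    (hint : Integrable (llr μ ν) μ) : 0 ≤ ∫ x, llr μ ν x ∂μ := by
  have hint' : Integrable (llr ν μ) μ := (hint.neg).congr (neg_llr hμν)
  have h2 : ∫ x, llr ν μ x ∂μ ≤ ∫ x, ((ν.rnDeriv μ x).toReal - 1) ∂μ := by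
    refine integral_mono_ae hint'
      (Measure.integrable_toReal_rnDeriv.sub (integrable_const 1)) ?_
    filter_upwards [Measure.rnDeriv_pos' hμν, Measure.rnDeriv_lt_top ν μ] with x hpos hlt
    exact Real.log_le_sub_one_of_pos (ENNReal.toReal_pos hpos.ne' hlt.ne)
  have h3 : ∫ x, ((ν.rnDeriv μ x).toReal - 1) ∂μ ≤ 0 := by
    rw [integral_sub Measure.integrable_toReal_rnDeriv (integrable_const 1)]
    have h4 : ∫ x, (ν.rnDeriv μ x).toReal ∂μ ≤ (ν univ).toReal := by
      rw [← setIntegral_univ]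
      exact Measure.setIntegral_toReal_rnDeriv_le (measure_ne_top ν univ)
    simp only [measure_univ, ENNReal.toReal_one] at h4
    simp only [integral_const, measure_univ, probReal_univ, ENNReal.toReal_one, smul_eq_mul, one_mul]
    linarith
  have h5 : ∫ x, llr ν μ x ∂μ = - ∫ x, llr μ ν x ∂μ := by
    rw [← integral_neg]
    exact (integral_congr_ae (neg_llr hμν)).symm
  linarith

set_option maxHeartbeats 1000000 in
/-- **Example 2 (subgaussian hypothesis on the generalization metric)**: if `n·G` is
`σ`-subgaussian around its mean then the PACMAN generalization gap `G` is at most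
`I(S;𝐡)/n + (1/n)·√(2σ²·log(1/δ))` with probability at least `1 - δ`. -/
theorem stmt_9 {𝒮 ℋ : Type*} [MeasurableSpace 𝒮] [MeasurableSpace ℋ]
    [StandardBorelSpace 𝒮] [StandardBorelSpace ℋ]
    (μ : Measure (𝒮 × ℋ)) [IsProbabilityMeasure μ]
    (κ : Kernel ℋ 𝒮) [IsMarkovKernel κ] (q : Kernel ℋ 𝒮) [IsMarkovKernel q]
    (hκ : ∀ (A : Set 𝒮) (B : Set ℋ), MeasurableSet A → MeasurableSet B →
      μ (A ×ˢ B) = ∫⁻ h in B, κ h A ∂μ.snd)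
    (n : ℕ) (hn : 1 ≤ n) (δ σ : ℝ) (hδ : δ ∈ Ioc (0 : ℝ) 1) (hσ : 0 < σ)
    (hac : μ ≪ μ.fst.prod μ.snd)
    (hIint : Integrable (fun z => Real.log ((μ.rnDeriv (μ.fst.prod μ.snd)) z).toReal) μ)
    (I : ℝ) (hI : I = ∫ z, Real.log ((μ.rnDeriv (μ.fst.prod μ.snd)) z).toReal ∂μ)
    (hqκ : ∀ᵐ h ∂μ.snd, q h ≪ κ h ∧ κ h ≪ q h ∧ κ h ≪ μ.fst)
    (G : 𝒮 × ℋ → ℝ)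
    (hG : ∀ sh, G sh = (1 / (n : ℝ)) * Real.log (((q sh.2).rnDeriv μ.fst sh.1).toReal))
    (hGint : Integrable G μ)
    (hsub : ∀ l : ℝ, 0 < l →
      Integrable (fun sh => Real.exp (l * n * G sh)) μ ∧
      Real.log (∫ sh, Real.exp (l * n * G sh) ∂μ)
        ≤ l * n * (∫ sh, G sh ∂μ) + l ^ 2 * σ ^ 2 / 2) :
    μ {sh : 𝒮 × ℋ |
        G sh > I / n + (1 / (n : ℝ)) * Real.sqrt (2 * σ ^ 2 * Real.log (1 / δ))} ≤
      ENNReal.ofReal δ := by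
  obtain ⟨hδ0, hδ1⟩ := hδ
  have hn0 : (0 : ℝ) < n := by exact_mod_cast Nat.lt_of_lt_of_le Nat.zero_lt_one hn
  have hswap : MeasurableEmbedding (Prod.swap : 𝒮 × ℋ → ℋ × 𝒮) :=
    (MeasurableEquiv.prodComm : 𝒮 × ℋ ≃ᵐ ℋ × 𝒮).measurableEmbedding
  haveI : IsProbabilityMeasure (μ.map Prod.swap) :=
    Measure.isProbabilityMeasure_map measurable_swap.aemeasurable
  set ν' : Measure (ℋ × 𝒮) := μ.snd ⊗ₘ q with hν'def
  set P' : Measure (ℋ × 𝒮) := μ.snd.prod μ.fst with hP'def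
  haveI : IsProbabilityMeasure ν' := ⟨by rw [hν'def, Measure.compProd_apply_univ]; exact measure_univ⟩
  -- Step A : the swapped measure is the compProd of `μ.snd` and `κ`
  have hμ'_eq : μ.map Prod.swap = μ.snd ⊗ₘ κ := by
    refine ext_of_generate_finite _ generateFrom_prod.symm isPiSystem_prod ?_ ?_
    · rintro s ⟨B, hB, A, hA, rfl⟩
      simp only [mem_setOf_eq] at hB hA
      rw [Measure.map_apply measurable_swap (hB.prod hA), preimage_swap_prod,
        hκ A B hA hB, Measure.compProd_apply_prod hB hA]
    · rw [Measure.map_apply measurable_swap MeasurableSet.univ, preimage_univ,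
        Measure.compProd_apply_univ, measure_univ, measure_univ]
  -- absolute continuity facts
  have hq_ac : ∀ᵐ h ∂μ.snd, q h ≪ μ.fst := by
    filter_upwards [hqκ] with h hh; exact hh.1.trans hh.2.2
  have hκq : ∀ᵐ h ∂μ.snd, κ h ≪ q h := by
    filter_upwards [hqκ] with h hh; exact hh.2.1
  have hμ'ν' : μ.map Prod.swap ≪ ν' := by
    rw [hμ'_eq]; exact Measure.AbsolutelyContinuous.compProd_right hκq
  have hν'P' : ν' ≪ P' := by
    have hPc : P' = μ.snd ⊗ₘ Kernel.const ℋ μ.fst := Measure.compProd_const.symm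
    rw [hPc]
    refine Measure.AbsolutelyContinuous.compProd_right ?_
    filter_upwards [hq_ac] with h hh
    rw [Kernel.const_apply]; exact hh
  have hμ'P' : μ.map Prod.swap ≪ P' := hμ'ν'.trans hν'P'
  -- Step C : `ν'` has density `f` w.r.t. `P'`
  set f : ℋ × 𝒮 → ℝ≥0∞ := fun p => Kernel.rnDeriv q (Kernel.const ℋ μ.fst) p.1 p.2 with hfdef
  have hf_meas : Measurable f := Kernel.measurable_rnDeriv q (Kernel.const ℋ μ.fst)
  have hrect : ∀ (B : Set ℋ) (A : Set 𝒮), MeasurableSet B → MeasurableSet A →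
      P'.withDensity f (B ×ˢ A) = ∫⁻ h in B, q h A ∂μ.snd := by
    intro B A hB hA
    rw [withDensity_apply _ (hB.prod hA), hP'def, ← Measure.prod_restrict,
      lintegral_prod _ hf_meas.aemeasurable]
    refine lintegral_congr_ae ?_
    filter_upwards [ae_restrict_of_ae hq_ac] with h hh
    calc ∫⁻ s, f (h, s) ∂μ.fst.restrict A
        = ∫⁻ s in A, (q h).rnDeriv μ.fst s ∂μ.fst := by
          refine lintegral_congr_ae (ae_restrict_of_ae ?_)
          have hk := Kernel.rnDeriv_eq_rnDeriv_measure (κ := q)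
            (η := Kernel.const ℋ μ.fst) (a := h)
          exact hk
      _ = q h A := Measure.setLIntegral_rnDeriv hh A
  have hν'_eq : ν' = P'.withDensity f := by
    refine ext_of_generate_finite _ generateFrom_prod.symm isPiSystem_prod ?_ ?_
    · rintro s ⟨B, hB, A, hA, rfl⟩
      simp only [mem_setOf_eq] at hB hA
      rw [hν'def, Measure.compProd_apply_prod hB hA, hrect B A hB hA]
    · rw [← univ_prod_univ, hν'def, Measure.compProd_apply_prod MeasurableSet.univ
        MeasurableSet.univ, hrect univ univ MeasurableSet.univ MeasurableSet.univ]
  have hL2 : ν'.rnDeriv P' =ᵐ[P'] f := by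
    rw [hν'_eq]; exact Measure.rnDeriv_withDensity P' hf_meas
  -- Step D : identify `log (f ·).toReal` with `n • G ∘ swap` a.e.
  set F : ℋ × 𝒮 → ℝ := fun p => Real.log (f p).toReal with hFdef
  have hF_meas : Measurable F := Real.measurable_log.comp hf_meas.ennreal_toReal
  set W : ℋ × 𝒮 → ℝ := fun p => (n : ℝ) * G (p.2, p.1) with hWdef
  have hWint : Integrable W (μ.map Prod.swap) := by
    rw [hswap.integrable_map_iff]
    exact hGint.const_mul (n : ℝ)
  have hsec : ∀ᵐ h ∂μ.snd, ∀ᵐ s ∂(κ h), F (h, s) = W (h, s) := by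
    filter_upwards [hqκ] with h hh
    have hκfst : κ h ≪ μ.fst := hh.2.2
    have heq : (fun s => f (h, s)) =ᵐ[μ.fst] (q h).rnDeriv μ.fst := by
      have hk := Kernel.rnDeriv_eq_rnDeriv_measure (κ := q)
        (η := Kernel.const ℋ μ.fst) (a := h)
      simpa only [hfdef, Kernel.const_apply] using hk
    filter_upwards [hκfst.ae_le heq] with s hs
    simp only [hFdef, hWdef, hG (s, h), hs]
    field_simp
  obtain ⟨W₀, hW₀sm, hWW₀⟩ := hWint.aestronglyMeasurable
  have hW₀sec : ∀ᵐ h ∂μ.snd, ∀ᵐ s ∂(κ h), W (h, s) = W₀ (h, s) := by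
    have h0 := hWW₀
    rw [hμ'_eq] at h0
    exact Measure.ae_ae_of_ae_compProd h0
  have hFW₀ : ∀ᵐ p ∂(μ.map Prod.swap), F p = W₀ p := by
    rw [hμ'_eq]
    refine Measure.ae_compProd_of_ae_ae (measurableSet_eq_fun hF_meas hW₀sm.measurable) ?_
    filter_upwards [hsec, hW₀sec] with h h1 h2
    filter_upwards [h1, h2] with s e1 e2
    exact e1.trans e2
  have hFW : F =ᵐ[μ.map Prod.swap] W := by
    have hx : F =ᵐ[μ.map Prod.swap] W₀ := hFW₀
    exact hx.trans hWW₀.symm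
  have hFint : Integrable F (μ.map Prod.swap) := hWint.congr hFW.symm
  have hFval : ∫ p, F p ∂(μ.map Prod.swap) = (n : ℝ) * ∫ z, G z ∂μ := by
    rw [integral_congr_ae hFW, hswap.integral_map]
    have : (fun x : 𝒮 × ℋ => W (Prod.swap x)) = fun x => (n : ℝ) * G x := by
      funext x; simp [hWdef]
    rw [this, integral_const_mul]
  -- the llr w.r.t. `ν'` and `P'`
  have hFllr : llr ν' P' =ᵐ[μ.map Prod.swap] F := by
    filter_upwards [hμ'P'.ae_le hL2] with p hp
    simp only [llr, hp, hFdef]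
  have hllr2_int : Integrable (llr ν' P') (μ.map Prod.swap) := hFint.congr hFllr.symm
  have hllr2_val : ∫ p, llr ν' P' p ∂(μ.map Prod.swap) = (n : ℝ) * ∫ z, G z ∂μ := by
    rw [integral_congr_ae hFllr, hFval]
  -- the llr w.r.t. `μ'` and `P'`
  have hPswap : (μ.fst.prod μ.snd).map Prod.swap = P' := Measure.prod_swap
  have h1' : (fun x => llr (μ.map Prod.swap) P' (Prod.swap x)) =ᵐ[μ]
      llr μ (μ.fst.prod μ.snd) := by
    have h := hswap.rnDeriv_map μ (μ.fst.prod μ.snd)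
    rw [hPswap] at h
    filter_upwards [hac.ae_le h] with z hz
    simp only [llr, hz]
  have hllr1_int : Integrable (llr (μ.map Prod.swap) P') (μ.map Prod.swap) := by
    rw [hswap.integrable_map_iff]
    exact hIint.congr h1'.symm
  have hllr1_val : ∫ p, llr (μ.map Prod.swap) P' p ∂(μ.map Prod.swap) = I := by
    rw [hswap.integral_map, hI]
    exact integral_congr_ae h1'
  -- chain rule
  have hchain : llr (μ.map Prod.swap) ν' =ᵐ[μ.map Prod.swap]
      fun p => llr (μ.map Prod.swap) P' p - llr ν' P' p := by
    have hmul := hμ'P'.ae_le (Measure.rnDeriv_mul_rnDeriv (κ := P') hμ'ν')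
    filter_upwards [hmul, Measure.rnDeriv_pos hμ'ν',
      hμ'ν'.ae_le (Measure.rnDeriv_lt_top (μ.map Prod.swap) ν'),
      hμ'ν'.ae_le (Measure.rnDeriv_pos hν'P'),
      hμ'P'.ae_le (Measure.rnDeriv_lt_top ν' P')] with p h1 h2 h3 h4 h5
    have ha : ((μ.map Prod.swap).rnDeriv ν' p).toReal ≠ 0 :=
      (ENNReal.toReal_pos h2.ne' h3.ne).ne'
    have hb : ((ν'.rnDeriv P') p).toReal ≠ 0 := (ENNReal.toReal_pos h4.ne' h5.ne).ne'
    simp only [llr]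
    rw [← h1, Pi.mul_apply, ENNReal.toReal_mul, Real.log_mul ha hb]
    ring
  have hllr3_int : Integrable (llr (μ.map Prod.swap) ν') (μ.map Prod.swap) :=
    (hllr1_int.sub hllr2_int).congr hchain.symm
  have hgibbs := gibbs_nonneg hμ'ν' hllr3_int
  have hval3 : ∫ p, llr (μ.map Prod.swap) ν' p ∂(μ.map Prod.swap)
      = I - (n : ℝ) * ∫ z, G z ∂μ := by
    rw [integral_congr_ae hchain, integral_sub hllr1_int hllr2_int, hllr1_val, hllr2_val]
  rw [hval3] at hgibbs
  have hkey : (n : ℝ) * ∫ z, G z ∂μ ≤ I := by linarith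
  -- Step E : Chernoff bound
  rcases eq_or_lt_of_le hδ1 with hδeq | hδlt
  · rw [hδeq, ENNReal.ofReal_one]
    exact prob_le_one
  · have hlogδ : 0 < Real.log (1 / δ) := Real.log_pos ((one_lt_div hδ0).mpr hδlt)
    set c : ℝ := Real.sqrt (2 * σ ^ 2 * Real.log (1 / δ)) with hc
    have hc0 : 0 < c := Real.sqrt_pos.2 (by positivity)
    have hc2 : c ^ 2 = 2 * σ ^ 2 * Real.log (1 / δ) := Real.sq_sqrt (by positivity)
    set l : ℝ := c / σ ^ 2 with hl
    have hl0 : 0 < l := by positivity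
    obtain ⟨hexp_int, hexp_bd⟩ := hsub l hl0
    have hexp_pos : 0 < ∫ sh, Real.exp (l * n * G sh) ∂μ := integral_exp_pos hexp_int
    set t : ℝ := I / n + 1 / (n : ℝ) * c with ht
    have hnt : l * n * t = l * I + l * c := by
      rw [ht]; field_simp
    have hsubset : {sh : 𝒮 × ℋ | G sh > t}
        ⊆ {sh : 𝒮 × ℋ | Real.exp (l * n * t) ≤ Real.exp (l * n * G sh)} := by
      intro sh hsh
      exact Real.exp_le_exp.2 (mul_le_mul_of_nonneg_left (le_of_lt hsh) (by positivity))
    have hmarkov := mul_meas_ge_le_integral_of_nonneg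
      (ae_of_all μ fun sh => (Real.exp_pos (l * n * G sh)).le) hexp_int (Real.exp (l * n * t))
    have hEbd : ∫ sh, Real.exp (l * n * G sh) ∂μ
        ≤ Real.exp (l * n * (∫ sh, G sh ∂μ) + l ^ 2 * σ ^ 2 / 2) := by
      rw [← Real.exp_log hexp_pos]
      exact Real.exp_le_exp.2 hexp_bd
    have e1 : l ^ 2 * σ ^ 2 / 2 = Real.log (1 / δ) := by
      rw [hl, div_pow, hc2]; field_simp
    have e2 : l * c = 2 * Real.log (1 / δ) := by
      rw [hl, div_mul_eq_mul_div, ← sq, hc2]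
      field_simp
    have hlnG : l * n * (∫ sh, G sh ∂μ) ≤ l * I := by
      rw [mul_assoc]
      exact mul_le_mul_of_nonneg_left hkey hl0.le
    have hlogδ' : Real.log δ = - Real.log (1 / δ) := by
      rw [one_div, Real.log_inv]; ring
    have hexponent : l * n * (∫ sh, G sh ∂μ) + l ^ 2 * σ ^ 2 / 2 - l * n * t
        ≤ Real.log δ := by
      rw [hnt, hlogδ']
      linarith
    have hAδ : (μ {sh : 𝒮 × ℋ | Real.exp (l * n * t) ≤ Real.exp (l * n * G sh)}).toReal
        ≤ δ := by
      have h6 : (μ {sh : 𝒮 × ℋ | Real.exp (l * n * t) ≤ Real.exp (l * n * G sh)}).toReal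
          ≤ Real.exp (l * n * (∫ sh, G sh ∂μ) + l ^ 2 * σ ^ 2 / 2) / Real.exp (l * n * t) := by
        rw [le_div_iff₀ (Real.exp_pos _), mul_comm]
        exact hmarkov.trans hEbd
      rw [← Real.exp_sub] at h6
      calc (μ _).toReal ≤ Real.exp (l * n * (∫ sh, G sh ∂μ) + l ^ 2 * σ ^ 2 / 2 - l * n * t) := h6
        _ ≤ Real.exp (Real.log δ) := Real.exp_le_exp.2 hexponent
        _ = δ := Real.exp_log hδ0
    calc μ {sh : 𝒮 × ℋ | G sh > t} ≤ μ {sh : 𝒮 × ℋ | Real.exp (l * n * t) ≤ Real.exp (l * n * G sh)} :=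
          measure_mono hsubset
      _ = ENNReal.ofReal (μ {sh : 𝒮 × ℋ | Real.exp (l * n * t) ≤ Real.exp (l * n * G sh)}).toReal :=
          (ENNReal.ofReal_toReal (measure_ne_top μ _)).symm
      _ ≤ ENNReal.ofReal δ := ENNReal.ofReal_le_ofReal hAδ
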